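/- For the auxiliary min-cost assignment problem, the following holds: given identical-point groups S_1,...,S_t each of size s and centers c_1,...,c_k (t ≤ k), the minimum over all partitions {Z_1,...,Z_k} of S_1 ∪ ... ∪ S_t with |Z_i| ≤ s of ∑_{i=1}^k ∑_{x ∈ Z_i} ‖x − c_i‖_p is equal to s · min over injections σ: {1,...,t} → {1,...,k} of ∑_{h=1}^t ‖x_h − c_{σ(h)}‖_p, where x_h denotes the common value of the points in S_h. -/

import Mathlib

open Finset

/-- The ℓ_p norm of a real vector, for integer `p ≥ 1`. -/
noncomputable def lpNorm (p : ℕ) {d : ℕ} (x : Fin d → ℝ) : ℝ :=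
  (∑ i, |x i| ^ p) ^ ((1 : ℝ) / p)

/-- Cost of a cluster (multiset of integer points) with respect to a given center `c`. -/
noncomputable def costW (p : ℕ) {d : ℕ} (T : Multiset (Fin d → ℤ)) (c : Fin d → ℝ) : ℝ :=
  (T.map (fun x => lpNorm p (fun i => c i - (x i : ℝ)))).sum

/-- Cost of a cluster: infimum over all centers `c ∈ ℝ^d`. -/
noncomputable def clCost (p : ℕ) {d : ℕ} (T : Multiset (Fin d → ℤ)) : ℝ :=
  sInf (Set.range (costW p T))



section Aux
variable {k s : ℕ}

private lemma rows_full (b : Fin k → Fin k → ℕ)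
    (hrow : ∀ h, ∑ i, b h i ≤ s) (htot : ∑ h, ∑ i, b h i = k * s) :
    ∀ h, ∑ i, b h i = s := by
  by_contra hcon
  push_neg at hcon
  obtain ⟨h0, hh0⟩ := hcon
  have hlt : ∑ h, ∑ i, b h i < ∑ _h : Fin k, s := by
    apply Finset.sum_lt_sum (fun h _ => hrow h)
    exact ⟨h0, mem_univ _, lt_of_le_of_ne (hrow h0) hh0⟩
  simp [Finset.sum_const, mul_comm] at hlt
  omega

private lemma complete_matrix :
    ∀ n (b : Fin k → Fin k → ℕ), k * s - (∑ h, ∑ i, b h i) ≤ n →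
      (∀ h, ∑ i, b h i ≤ s) → (∀ i, ∑ h, b h i ≤ s) →
      ∃ e : Fin k → Fin k → ℕ, (∀ h i, b h i ≤ e h i) ∧
        (∀ h, ∑ i, e h i = s) ∧ (∀ i, ∑ h, e h i = s) := by
  intro n
  induction n with
  | zero =>
    intro b hn hrow hcol
    have htot : ∑ h, ∑ i, b h i = k * s := by
      have h1 : ∑ h, ∑ i, b h i ≤ ∑ _h : Fin k, s := Finset.sum_le_sum fun h _ => hrow h
      simp [Finset.sum_const, mul_comm] at h1
      omega
    refine ⟨b, fun _ _ => le_rfl, rows_full b hrow htot, ?_⟩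
    have hcom : ∑ i, ∑ h, b h i = k * s := by rw [Finset.sum_comm]; exact htot
    exact rows_full (fun i h => b h i) hcol hcom
  | succ n ih =>
    intro b hn hrow hcol
    by_cases htot : ∑ h, ∑ i, b h i = k * s
    · refine ⟨b, fun _ _ => le_rfl, rows_full b hrow htot, ?_⟩
      have hcom : ∑ i, ∑ h, b h i = k * s := by rw [Finset.sum_comm]; exact htot
      exact rows_full (fun i h => b h i) hcol hcom
    · have htot' : ∑ h, ∑ i, b h i < k * s := by
        have h1 : ∑ h, ∑ i, b h i ≤ ∑ _h : Fin k, s := Finset.sum_le_sum fun h _ => hrow h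
        simp [Finset.sum_const, mul_comm] at h1
        omega
      -- find a row with sum < s
      have hrowex : ∃ h0, ∑ i, b h0 i < s := by
        by_contra hcon
        push_neg at hcon
        have : ∀ h, ∑ i, b h i = s := fun h => le_antisymm (hrow h) (hcon h)
        have : ∑ h, ∑ i, b h i = ∑ _h : Fin k, s := Finset.sum_congr rfl fun h _ => this h
        simp [Finset.sum_const, mul_comm] at this
        omega
      have hcolex : ∃ i0, ∑ h, b h i0 < s := by
        by_contra hcon
        push_neg at hcon
        have h2 : ∀ i, ∑ h, b h i = s := fun i => le_antisymm (hcol i) (hcon i)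
        have h3 : ∑ i, ∑ h, b h i = ∑ _i : Fin k, s := Finset.sum_congr rfl fun i _ => h2 i
        rw [Finset.sum_comm] at h3
        simp [Finset.sum_const, mul_comm] at h3
        omega
      obtain ⟨h0, hh0⟩ := hrowex
      obtain ⟨i0, hi0⟩ := hcolex
      classical
      set b' : Fin k → Fin k → ℕ :=
        fun h i => b h i + (if h = h0 ∧ i = i0 then 1 else 0) with hb'
      have hrow' : ∀ h, ∑ i, b' h i = ∑ i, b h i + (if h = h0 then 1 else 0) := by
        intro h
        simp only [hb', Finset.sum_add_distrib]
        congr 1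
        by_cases hh : h = h0
        · simp [hh]
        · simp [hh]
      have hcol' : ∀ i, ∑ h, b' h i = ∑ h, b h i + (if i = i0 then 1 else 0) := by
        intro i
        simp only [hb', Finset.sum_add_distrib]
        congr 1
        by_cases hi : i = i0
        · simp [hi]
        · simp [hi]
      have htot2 : ∑ h, ∑ i, b' h i = (∑ h, ∑ i, b h i) + 1 := by
        simp only [hrow']
        rw [Finset.sum_add_distrib]
        simp
      obtain ⟨e, he1, he2, he3⟩ := ih b' (by omega)
        (fun h => by rw [hrow' h]; have := hrow h; by_cases hh : h = h0 <;> simp [hh] <;> omega)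
        (fun i => by rw [hcol' i]; have := hcol i; by_cases hi : i = i0 <;> simp [hi] <;> omega)
      exact ⟨e, fun h i => le_trans (Nat.le_add_right _ _) (he1 h i), he2, he3⟩

end Aux



section Aux2
variable {k s : ℕ}

private lemma exists_perm_pos (hs : 0 < s) (b : Fin k → Fin k → ℕ)
    (hrow : ∀ h, ∑ i, b h i = s) (hcol : ∀ i, ∑ h, b h i ≤ s) :
    ∃ π : Equiv.Perm (Fin k), ∀ h, 0 < b h (π h) := by
  classical
  set N : Fin k → Finset (Fin k) := fun h => univ.filter (fun i => 0 < b h i) with hN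
  have hall : ∀ A : Finset (Fin k), #A ≤ #(A.biUnion N) := by
    intro A
    have h1 : ∀ h, ∑ i ∈ N h, b h i = s := by
      intro h
      rw [← hrow h]
      apply Finset.sum_filter_of_ne
      intro i _ hne
      omega
    have h2 : s * #A ≤ s * #(A.biUnion N) := by
      calc s * #A = ∑ h ∈ A, s := by simp [mul_comm]
        _ = ∑ h ∈ A, ∑ i ∈ N h, b h i := by
            exact Finset.sum_congr rfl fun h _ => (h1 h).symm
        _ ≤ ∑ h ∈ A, ∑ i ∈ A.biUnion N, b h i := by
            apply Finset.sum_le_sum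
            intro h hh
            exact Finset.sum_le_sum_of_subset (Finset.subset_biUnion_of_mem N hh)
        _ = ∑ i ∈ A.biUnion N, ∑ h ∈ A, b h i := Finset.sum_comm
        _ ≤ ∑ i ∈ A.biUnion N, ∑ h, b h i := by
            apply Finset.sum_le_sum
            intro i _
            exact Finset.sum_le_sum_of_subset (Finset.subset_univ A)
        _ ≤ ∑ _i ∈ A.biUnion N, s := Finset.sum_le_sum fun i _ => hcol i
        _ = s * #(A.biUnion N) := by simp [mul_comm]
    exact Nat.le_of_mul_le_mul_left h2 hs
  obtain ⟨f, hfinj, hf⟩ := (Finset.all_card_le_biUnion_card_iff_exists_injective N).mp hall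
  refine ⟨Equiv.ofBijective f (Finite.injective_iff_bijective.mp hfinj), fun h => ?_⟩
  have := hf h
  simp only [hN, Finset.mem_filter] at this
  exact this.2

private lemma decomp_ineq (w : Fin k → Fin k → ℝ) (M : ℝ)
    (hM : ∀ π : Equiv.Perm (Fin k), M ≤ ∑ h, w h (π h)) :
    ∀ s (b : Fin k → Fin k → ℕ), (∀ h, ∑ i, b h i = s) → (∀ i, ∑ h, b h i = s) →
      (s : ℝ) * M ≤ ∑ h, ∑ i, (b h i : ℝ) * w h i := by
  intro s
  induction s with
  | zero =>
    intro b hrow _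
    have hb : ∀ h i, b h i = 0 := by
      intro h i
      have := hrow h
      have h2 : b h i ≤ ∑ i', b h i' := Finset.single_le_sum (fun _ _ => Nat.zero_le _) (mem_univ i)
      omega
    simp [hb]
  | succ s ih =>
    intro b hrow hcol
    classical
    obtain ⟨π, hπ⟩ := exists_perm_pos (Nat.succ_pos s) b hrow (fun i => (hcol i).le)
    set b' : Fin k → Fin k → ℕ := fun h i => b h i - (if i = π h then 1 else 0) with hb'
    have hkey : ∀ h i, b' h i + (if i = π h then 1 else 0) = b h i := by
      intro h i
      by_cases hi : i = π h
      · subst hi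
        have := hπ h
        simp only [hb', eq_self_iff_true, if_true]
        omega
      · simp [hb', hi]
    have hrowsum : ∀ h, ∑ i, b' h i + 1 = s + 1 := by
      intro h
      have : ∑ i, (b' h i + (if i = π h then 1 else 0)) = s + 1 := by
        rw [Finset.sum_congr rfl fun i _ => hkey h i]; exact hrow h
      rw [Finset.sum_add_distrib] at this
      simpa using this
    have hcolsum : ∀ i, ∑ h, b' h i + 1 = s + 1 := by
      intro i
      have h1 : ∑ h, (b' h i + (if i = π h then 1 else 0)) = s + 1 := by
        rw [Finset.sum_congr rfl fun h _ => hkey h i]; exact hcol i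
      rw [Finset.sum_add_distrib] at h1
      have h2 : ∑ h, (if i = π h then 1 else 0) = 1 := by
        have hcong : ∀ h : Fin k, (if i = π h then 1 else 0)
            = (if h = π.symm i then (1 : ℕ) else 0) := by
          intro h
          by_cases hh : h = π.symm i
          · simp [hh]
          · have hne : i ≠ π h := fun hc => hh (by simp [hc])
            simp [hh, hne]
        rw [Finset.sum_congr rfl fun h _ => hcong h]
        simp
      omega
    have hrow' : ∀ h, ∑ i, b' h i = s := fun h => by have := hrowsum h; omega
    have hcol' : ∀ i, ∑ h, b' h i = s := fun i => by have := hcolsum i; omega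
    have hsplit : ∑ h, ∑ i, (b h i : ℝ) * w h i
        = (∑ h, ∑ i, (b' h i : ℝ) * w h i) + ∑ h, w h (π h) := by
      rw [← Finset.sum_add_distrib]
      apply Finset.sum_congr rfl
      intro h _
      have : ∀ i, (b h i : ℝ) * w h i
          = (b' h i : ℝ) * w h i + (if i = π h then w h i else 0) := by
        intro i
        rw [← hkey h i]
        push_cast
        by_cases hi : i = π h <;> simp [hi] <;> ring
      rw [Finset.sum_congr rfl fun i _ => this i, Finset.sum_add_distrib]
      simp
    rw [hsplit]
    push_cast
    have := ih b' hrow' hcol'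
    have := hM π
    linarith

end Aux2



private lemma sum_extend {M : Type*} [AddCommMonoid M] {t k : ℕ} (ht : t ≤ k)
    (F : Fin k → M) (hF : ∀ h : Fin k, t ≤ (h : ℕ) → F h = 0) :
    ∑ h, F h = ∑ h : Fin t, F (Fin.castLE ht h) := by
  classical
  set F' : ℕ → M := fun n => if hn : n < k then F ⟨n, hn⟩ else 0 with hF'
  have h1 : ∑ h, F h = ∑ n ∈ Finset.range k, F' n := by
    rw [← Fin.sum_univ_eq_sum_range F' k]
    apply Finset.sum_congr rfl
    intro h _
    simp [hF']
  have h2 : ∑ n ∈ Finset.range t, F' n + ∑ n ∈ Finset.Ico t k, F' n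
      = ∑ n ∈ Finset.range k, F' n := by
    rw [Finset.range_eq_Ico, Finset.range_eq_Ico]
    exact Finset.sum_Ico_consecutive F' (Nat.zero_le t) ht
  have h3 : ∑ n ∈ Finset.Ico t k, F' n = 0 := by
    apply Finset.sum_eq_zero
    intro n hn
    rw [Finset.mem_Ico] at hn
    simp only [hF', dif_pos hn.2]
    exact hF _ hn.1
  have h4 : ∑ n ∈ Finset.range t, F' n = ∑ h : Fin t, F (Fin.castLE ht h) := by
    rw [← Fin.sum_univ_eq_sum_range F' t]
    apply Finset.sum_congr rfl
    intro h _
    have hk : (h : ℕ) < k := lt_of_lt_of_le h.2 ht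
    simp only [hF', dif_pos hk]
    rfl
  rw [h1, ← h2, h3, h4, add_zero]

/-- the minimum cost of assigning `t` groups of `s` identical points
(with values `x₁,…,x_t`) to `k` centers, each center receiving at most `s` points,
equals `s` times the minimum over injections `σ : Fin t ↪ Fin k` of
`∑ h ‖x_h - c_{σ(h)}‖_p`. -/


theorem min_cost_capacitated_assignment_eq_min_injection
    {d t k s : ℕ} (p : ℕ) (hp : 1 ≤ p) (ht : t ≤ k) (hs : 0 < s)
    (x : Fin t → Fin d → ℤ) (c : Fin k → Fin d → ℝ) :
    sInf {r : ℝ | ∃ a : Fin t → Fin k → ℕ,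
        (∀ h, ∑ i, a h i = s) ∧ (∀ i, ∑ h, a h i ≤ s) ∧
        r = ∑ h, ∑ i, (a h i : ℝ) * lpNorm p (fun j => (x h j : ℝ) - c i j)} =
      (s : ℝ) * sInf {r : ℝ | ∃ σ : Fin t ↪ Fin k,
        r = ∑ h, lpNorm p (fun j => (x h j : ℝ) - c (σ h) j)} := by
  classical
  set w : Fin t → Fin k → ℝ := fun h i => lpNorm p (fun j => (x h j : ℝ) - c i j) with hw
  have hne : Nonempty (Fin t ↪ Fin k) := ⟨Fin.castLEEmb ht⟩
  have hU : (univ : Finset (Fin t ↪ Fin k)).Nonempty := univ_nonempty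
  set F : (Fin t ↪ Fin k) → ℝ := fun σ => ∑ h, w h (σ h) with hF
  set m := univ.inf' hU F with hm
  have hR : sInf {r : ℝ | ∃ σ : Fin t ↪ Fin k,
      r = ∑ h, lpNorm p (fun j => (x h j : ℝ) - c (σ h) j)} = m := by
    have hRset : {r : ℝ | ∃ σ : Fin t ↪ Fin k,
        r = ∑ h, lpNorm p (fun j => (x h j : ℝ) - c (σ h) j)} = F '' ↑(univ : Finset (Fin t ↪ Fin k)) := by
      ext r
      constructor
      · rintro ⟨σ, rfl⟩; exact ⟨σ, by simp, rfl⟩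
      · rintro ⟨σ, -, rfl⟩; exact ⟨σ, rfl⟩
    rw [hRset]
    exact (Finset.inf'_eq_csInf_image _ hU _).symm
  rw [hR]
  obtain ⟨σ0, -, hσ0⟩ := Finset.exists_mem_eq_inf' hU F
  refine IsLeast.csInf_eq ⟨?_, ?_⟩
  · -- membership : s * m is achieved by the assignment induced by σ0
    refine ⟨fun h i => if i = σ0 h then s else 0, fun h => by simp, ?_, ?_⟩
    · intro i
      have hcard : #(univ.filter fun h : Fin t => i = σ0 h) ≤ 1 := by
        apply Finset.card_le_one.mpr
        intro a ha b hb
        rw [Finset.mem_filter] at ha hb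
        exact σ0.injective (ha.2.symm.trans hb.2)
      calc ∑ h, (if i = σ0 h then s else 0)
          = ∑ h ∈ univ.filter (fun h => i = σ0 h), s := (Finset.sum_filter _ _).symm
        _ = #(univ.filter fun h => i = σ0 h) * s := by simp [mul_comm]
        _ ≤ 1 * s := Nat.mul_le_mul_right s hcard
        _ = s := one_mul s
    · have hrow : ∀ h : Fin t,
          ∑ i, ((if i = σ0 h then s else 0 : ℕ) : ℝ) * w h i = (s : ℝ) * w h (σ0 h) := by
        intro h
        have : ∀ i, ((if i = σ0 h then s else 0 : ℕ) : ℝ) * w h i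
            = (if i = σ0 h then (s : ℝ) * w h i else 0) := by
          intro i
          by_cases hi : i = σ0 h <;> simp [hi]
        rw [Finset.sum_congr rfl fun i _ => this i]
        simp
      rw [Finset.sum_congr rfl fun h _ => hrow h, ← Finset.mul_sum]
      rw [hm, hσ0]
  · -- lower bound
    rintro r ⟨a, harow, hacol, rfl⟩
    set b : Fin k → Fin k → ℕ := fun h i => if hh : (h : ℕ) < t then a ⟨h, hh⟩ i else 0 with hb
    have hbcast : ∀ (h : Fin t) (i : Fin k), b (Fin.castLE ht h) i = a h i := by
      intro h i
      have hh : ((Fin.castLE ht h : Fin k) : ℕ) < t := h.2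
      simp only [hb, dif_pos hh]
      have he : (⟨((Fin.castLE ht h : Fin k) : ℕ), hh⟩ : Fin t) = h := Fin.ext (by simp)
      rw [he]
    have hbrow : ∀ h, ∑ i, b h i ≤ s := by
      intro h
      by_cases hh : (h : ℕ) < t
      · simp only [hb, dif_pos hh]
        exact (harow _).le
      · simp [hb, dif_neg hh]
    have hbcol : ∀ i, ∑ h, b h i ≤ s := by
      intro i
      rw [sum_extend ht (fun h => b h i) (fun h hth => by simp [hb, dif_neg (not_lt.mpr hth)])]
      rw [Finset.sum_congr rfl fun h _ => hbcast h i]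
      exact hacol i
    obtain ⟨e, hbe, herow, hecol⟩ := complete_matrix (k * s) b (Nat.sub_le _ _) hbrow hbcol
    have hagree : ∀ (h : Fin t) (i : Fin k), e (Fin.castLE ht h) i = a h i := by
      intro h i
      have hsum : ∑ i, b (Fin.castLE ht h) i = ∑ i, e (Fin.castLE ht h) i := by
        rw [herow, Finset.sum_congr rfl fun i _ => hbcast h i]
        exact harow h
      have := (Finset.sum_eq_sum_iff_of_le (fun i _ => hbe (Fin.castLE ht h) i)).mp hsum
      rw [← this i (mem_univ i), hbcast]
    set wext : Fin k → Fin k → ℝ := fun h i => if hh : (h : ℕ) < t then w ⟨h, hh⟩ i else 0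
      with hwext
    have hwcast : ∀ (h : Fin t) (i : Fin k), wext (Fin.castLE ht h) i = w h i := by
      intro h i
      have hh : ((Fin.castLE ht h : Fin k) : ℕ) < t := h.2
      simp only [hwext, dif_pos hh]
      have he : (⟨((Fin.castLE ht h : Fin k) : ℕ), hh⟩ : Fin t) = h := Fin.ext (by simp)
      rw [he]
    have hM : ∀ π : Equiv.Perm (Fin k), m ≤ ∑ h, wext h (π h) := by
      intro π
      rw [sum_extend ht (fun h => wext h (π h))
        (fun h hth => by simp [hwext, dif_neg (not_lt.mpr hth)])]
      set σπ : Fin t ↪ Fin k :=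
        ⟨fun h => π (Fin.castLE ht h),
         fun a b hab => (Fin.castLEEmb ht).injective (π.injective hab)⟩ with hσπ
      have : ∑ h : Fin t, wext (Fin.castLE ht h) (π (Fin.castLE ht h)) = F σπ := by
        apply Finset.sum_congr rfl
        intro h _
        rw [hwcast]
        rfl
      rw [this]
      exact Finset.inf'_le F (mem_univ σπ)
    have hcost : ∑ h, ∑ i, (e h i : ℝ) * wext h i
        = ∑ h, ∑ i, (a h i : ℝ) * w h i := by
      rw [sum_extend ht (fun h => ∑ i, (e h i : ℝ) * wext h i)
        (fun h hth => by simp [hwext, dif_neg (not_lt.mpr hth)])]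
      apply Finset.sum_congr rfl
      intro h _
      apply Finset.sum_congr rfl
      intro i _
      rw [hagree, hwcast]
    have := decomp_ineq wext m hM s e herow hecol
    rw [hcost] at this
    exact this
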